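/- (Fundamental Construction for splitting GDDs) Let (X, G, A) be a GDD(t, k, v). Suppose for each block A ∈ A there is a splitting GDD(t, k'×c, kc) of type c^k on point set A×{1,...,c} with groups {x}×{1,...,c}, x ∈ A. Then (X×{1,...,c}, {G×{1,...,c}: G ∈ G}, ∪_{A} B_A) is a splitting GDD(t, k'×c, vc) of type [c|G| : G ∈ G]. -/
import Mathlib


/-- A `k × c` block with entries in `X`: each point of `X` occurs at most once
in the array (i.e. the array of entries is injective). -/
def IsBlock {X : Type*} (k c : ℕ) (B : Fin k → Fin c → X) : Prop :=
  Function.Injective fun p : Fin k × Fin c => B p.1 p.2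

/-- The points of `T` occur in pairwise distinct rows of the block `B`. -/
def OccursInDistinctRows {X : Type*} {k c : ℕ} (B : Fin k → Fin c → X)
    (T : Finset X) : Prop :=
  ∃ f : X → Fin k, Set.InjOn f ↑T ∧ ∀ x ∈ T, ∃ j : Fin c, B (f x) j = x

/-- A splitting `t`-`(v, k × c, λ)` design on point set `X`, with blocks indexed by `ι`:
every `t`-subset of points occurs in `t` pairwise distinct rows of exactly `lam` blocks. -/
structure IsSplittingDesign {X ι : Type*} [Fintype X] [Fintype ι]
    (t v k c lam : ℕ) (B : ι → Fin k → Fin c → X) : Prop where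
  card_points : Fintype.card X = v
  block : ∀ i, IsBlock k c (B i)
  balance : ∀ T : Finset X, T.card = t →
    Nat.card {i : ι // OccursInDistinctRows (B i) T} = lam

/-- Existence of a splitting `t`-`(v, k × c, lam)` design. -/
def SplittingDesignExists (t v k c lam : ℕ) : Prop :=
  ∃ (ι : Type) (_ : Fintype ι) (B : ι → Fin k → Fin c → Fin v),
    IsSplittingDesign t v k c lam B

/-- A group divisible design GDD`(t, k, v)`: groups are the fibers of `grp`,
blocks are `k`-subsets meeting each group in at most one point, and every
`t`-subset with at most one point per group lies in exactly one block. -/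
structure IsGDD {X Γ ι : Type*} [Fintype X] [Fintype ι]
    (t k : ℕ) (grp : X → Γ) (Blk : ι → Finset X) : Prop where
  block_card : ∀ i, (Blk i).card = k
  block_transversal : ∀ i, Set.InjOn grp ↑(Blk i)
  balance : ∀ T : Finset X, T.card = t → Set.InjOn grp ↑T →
    Nat.card {i : ι // T ⊆ Blk i} = 1

/-- A splitting GDD`(t, k × c, v)`: groups are the fibers of `grp`, blocks are
`k × c` arrays (each point at most once per array), and every `t`-subset with at
most one point per group occurs in `t` distinct rows of exactly one block. -/
structure IsSplittingGDD {X Γ ι : Type*} [Fintype X] [Fintype ι]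
    (t k c : ℕ) (grp : X → Γ) (B : ι → Fin k → Fin c → X) : Prop where
  block : ∀ i, IsBlock k c (B i)
  balance : ∀ T : Finset X, T.card = t → Set.InjOn grp ↑T →
    Nat.card {i : ι // OccursInDistinctRows (B i) T} = 1

/-- Fundamental Construction for splitting GDDs. Let `(X, grp, Blk)` be a
GDD`(t, k, v)`. Suppose that for each block `Blk i` there is a splitting
GDD`(t, k' × c, k c)` of type `c^k` on the point set `Blk i × Fin c`, with
groups `{x} × Fin c` for `x ∈ Blk i` (blocks `B i j`, `j : κ i`). Then the union
of all these blocks is a splitting GDD`(t, k' × c, v c)` on `X × Fin c` with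
groups `G × Fin c`, i.e. of type `[c |G| : G ∈ 𝒢]`. -/
theorem splitting_gdd_fundamental_construction
    {X Γ ι : Type*} [Fintype X] [Fintype ι]
    (t k k' c : ℕ) (hc : 0 < c)
    (grp : X → Γ) (Blk : ι → Finset X)
    (hGDD : IsGDD t k grp Blk)
    (κ : ι → Type) [∀ i, Fintype (κ i)]
    (B : ∀ i, κ i → Fin k' → Fin c → X × Fin c)
    (hentries : ∀ i j r s, (B i j r s).1 ∈ Blk i)
    (hblock : ∀ i j, IsBlock k' c (B i j))
    (hbalance : ∀ i, ∀ T : Finset (X × Fin c), T.card = t →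
      (∀ x ∈ T, x.1 ∈ Blk i) → Set.InjOn (fun p : X × Fin c => p.1) ↑T →
      Nat.card {j : κ i // OccursInDistinctRows (B i j) T} = 1) :
    IsSplittingGDD t k' c (fun p : X × Fin c => grp p.1)
      (fun q : Σ i : ι, κ i => B q.1 q.2) := by
  constructor
  · intro q; exact hblock q.1 q.2
  · intro T hT hinj
    classical
    have hfst : Set.InjOn Prod.fst (↑T : Set (X × Fin c)) := by
      intro a ha b hb hab
      exact hinj ha hb (by simp only []; rw [hab])
    set T₁ := T.image Prod.fst with hT₁
    have hcard : T₁.card = t := by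
      rw [hT₁, Finset.card_image_of_injOn hfst, hT]
    have hinj₁ : Set.InjOn grp ↑T₁ := by
      intro x hx y hy hxy
      simp only [hT₁, Finset.coe_image, Set.mem_image] at hx hy
      obtain ⟨a, ha, rfl⟩ := hx
      obtain ⟨b, hb, rfl⟩ := hy
      exact congrArg Prod.fst (hinj ha hb hxy)
    have h1 := hGDD.balance T₁ hcard hinj₁
    rw [Nat.card_eq_one_iff_unique] at h1
    obtain ⟨hsub, ⟨i₀, hi₀⟩⟩ := h1
    have hall : ∀ x ∈ T, x.1 ∈ Blk i₀ := fun x hx =>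
      hi₀ (Finset.mem_image_of_mem _ hx)
    have h2 := hbalance i₀ T hT hall hfst
    rw [Nat.card_eq_one_iff_unique] at h2
    obtain ⟨hsub2, ⟨j₀, hj₀⟩⟩ := h2
    rw [Nat.card_eq_one_iff_unique]
    have key : ∀ (q : Σ i : ι, κ i), OccursInDistinctRows (B q.1 q.2) T → T₁ ⊆ Blk q.1 := by
      rintro q ⟨f, -, hf⟩ x hx
      obtain ⟨a, ha, rfl⟩ := Finset.mem_image.mp hx
      obtain ⟨j, hj⟩ := hf a ha
      rw [← hj]; exact hentries _ _ _ _
    refine ⟨⟨?_⟩, ⟨⟨⟨i₀, j₀⟩, hj₀⟩⟩⟩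
    rintro ⟨⟨i, j⟩, hq⟩ ⟨⟨i', j'⟩, hq'⟩
    have e1 : i = i' := by
      have := @Subsingleton.elim _ hsub ⟨i, key ⟨i, j⟩ hq⟩ ⟨i', key ⟨i', j'⟩ hq'⟩
      exact congrArg Subtype.val this
    subst e1
    have e0 : i = i₀ := by
      have := @Subsingleton.elim _ hsub ⟨i, key ⟨i, j⟩ hq⟩ ⟨i₀, hi₀⟩
      exact congrArg Subtype.val this
    subst e0
    have e2 : j = j' := by
      have := @Subsingleton.elim _ hsub2 ⟨j, hq⟩ ⟨j', hq'⟩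
      exact congrArg Subtype.val this
    subst e2
    rfl
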